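/- Let G be a Coxeter group on Σ, x a new generator with x²=1 and (ax) of infinite order for all a∈Σ, forming G'=G*(ℤ/2ℤ). For w∈G write σ_w(x) = Σ_{b∈Σ∪{x}} λ_b b in the geometric representation of G'. Then for every b∈Σ: λ_b ≠ 0 if and only if b occurs in some (equivalently, every) geodesic word for w. Moreover λ_b ≥ 0 always, and λ_b > 0 when b occurs. -/

import Mathlib

/-- The defining relators of the Coxeter group with Coxeter matrix `M`. -/
def coxRels {S : Type*} (M : S → S → ℕ) : Set (FreeGroup S) :=
  {r | ∃ i j : S, r = (FreeGroup.of i * FreeGroup.of j) ^ (M i j)}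

/-- Evaluation of a word over the generating set in the Coxeter group of `M`. -/
def coxEval {S : Type*} (M : S → S → ℕ) (w : List S) : PresentedGroup (coxRels M) :=
  (w.map (fun a => PresentedGroup.of (rels := coxRels M) a)).prod

/-- The bilinear-form coefficients of the standard geometric representation. -/
noncomputable def coxB {S : Type*} (M : S → S → ℕ) (i j : S) : ℝ :=
  if M i j = 0 then -1 else -Real.cos (Real.pi / (M i j : ℝ))

/-- The standard geometric representation on a generator. -/
noncomputable def coxSigmaGen {S : Type*} [Fintype S] [DecidableEq S]
    (M : S → S → ℕ) (i : S) (v : S → ℝ) : S → ℝ :=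
  fun b => v b - (if b = i then 2 * ∑ j : S, v j * coxB M j i else 0)

/-- The geometric representation of a word `w = a₁ ⋯ aₙ`: `σ_w = σ_{a₁} ∘ ⋯ ∘ σ_{aₙ}`. -/
noncomputable def coxSigma {S : Type*} [Fintype S] [DecidableEq S]
    (M : S → S → ℕ) (w : List S) : (S → ℝ) → (S → ℝ) :=
  w.foldr (fun i f => (coxSigmaGen M i) ∘ f) id

/-- The unit basis vector of a letter `a`. -/
def unitVec {S : Type*} [DecidableEq S] (a : S) : S → ℝ :=
  fun b => if b = a then 1 else 0

/-- The Coxeter matrix of `G' = G * (ℤ/2ℤ)`: a new generator `x` (here `none`) is added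
with `x² = 1` and `m(a, x) = 0` (i.e. `ax` of infinite order) for all old generators. -/
def extMatrix {S : Type*} (M : S → S → ℕ) : Option S → Option S → ℕ :=
  fun x y => match x, y with
    | some i, some j => M i j
    | none, none => 1
    | _, _ => 0

set_option linter.unusedSectionVars false

namespace CoxAux

open CoxeterSystem

variable {T : Type*} [Fintype T] [DecidableEq T] (N : T → T → ℕ)

theorem coxSigma_nil : coxSigma N ([] : List T) = id := rfl

theorem coxSigma_cons (a : T) (w : List T) :
    coxSigma N (a :: w) = (coxSigmaGen N a) ∘ (coxSigma N w) := rfl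

theorem coxSigmaGen_apply_ne {b i : T} (h : b ≠ i) (v : T → ℝ) :
    coxSigmaGen N i v b = v b := by simp [coxSigmaGen, h]

theorem coxSigmaGen_apply_self (i : T) (v : T → ℝ) :
    coxSigmaGen N i v i = v i - 2 * ∑ j : T, v j * coxB N j i := by
  simp [coxSigmaGen]

theorem coxB_symm (hsym : ∀ i j, N i j = N j i) (i j : T) :
    coxB N i j = coxB N j i := by rw [coxB, coxB, hsym]

theorem coxB_diag {i : T} (h : N i i = 1) : coxB N i i = 1 := by
  simp [coxB, h, Real.cos_pi]

theorem coxB_nonpos {i j : T} (h : N i j ≠ 1) : coxB N i j ≤ 0 := by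
  rcases Nat.eq_zero_or_pos (N i j) with h0 | h1
  · simp [coxB, h0]
  · have h2 : 2 ≤ N i j := by omega
    have h2' : (2:ℝ) ≤ (N i j : ℝ) := by exact_mod_cast h2
    rw [coxB, if_neg (by omega)]
    have : 0 ≤ Real.cos (Real.pi / (N i j : ℝ)) := by
      apply Real.cos_nonneg_of_mem_Icc
      constructor
      · have := Real.pi_pos
        have : 0 ≤ Real.pi / (N i j : ℝ) := by positivity
        linarith
      · rw [div_le_div_iff₀ (by positivity) (by norm_num : (0:ℝ) < 2)]
        nlinarith [Real.pi_pos]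
    linarith

/-- linearity of `coxSigmaGen` -/
theorem coxSigmaGen_linear (i : T) (r s : ℝ) (u v : T → ℝ) :
    coxSigmaGen N i (fun d => r * u d + s * v d) =
      fun d => r * coxSigmaGen N i u d + s * coxSigmaGen N i v d := by
  funext b
  by_cases hb : b = i
  · subst hb
    rw [coxSigmaGen_apply_self, coxSigmaGen_apply_self, coxSigmaGen_apply_self]
    rw [show ∑ j : T, (r * u j + s * v j) * coxB N j b =
        r * ∑ j : T, u j * coxB N j b + s * ∑ j : T, v j * coxB N j b by
      rw [Finset.mul_sum, Finset.mul_sum, ← Finset.sum_add_distrib]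
      exact Finset.sum_congr rfl fun x _ => by ring]
    ring
  · simp only [coxSigmaGen, if_neg hb]
    ring

theorem coxSigma_linear (w : List T) (r s : ℝ) (u v : T → ℝ) :
    coxSigma N w (fun d => r * u d + s * v d) =
      fun d => r * coxSigma N w u d + s * coxSigma N w v d := by
  induction w with
  | nil => rfl
  | cons a w ih =>
    rw [coxSigma_cons]
    simp only [Function.comp_apply, Function.comp, ih]
    exact coxSigmaGen_linear N a r s _ _

theorem coxSigma_zero (w : List T) : coxSigma N w (fun _ => 0) = fun _ => 0 := by
  have := coxSigma_linear N w 0 0 (fun _ => 0) (fun _ => 0)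
  simpa using this

theorem coxSigmaGen_invol {i : T} (hBii : coxB N i i = 1) (v : T → ℝ) :
    coxSigmaGen N i (coxSigmaGen N i v) = v := by
  funext b
  by_cases hb : b = i
  · subst hb
    rw [coxSigmaGen_apply_self, coxSigmaGen_apply_self]
    have key : ∑ j : T, coxSigmaGen N b v j * coxB N j b =
        (∑ j : T, v j * coxB N j b) - (2 * ∑ j : T, v j * coxB N j b) * coxB N b b := by
      have step : ∀ j : T, coxSigmaGen N b v j * coxB N j b =
          v j * coxB N j b -
            (if j = b then (2 * ∑ k : T, v k * coxB N k b) * coxB N b b else 0) := by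
        intro j
        by_cases hx : j = b
        · subst hx; rw [coxSigmaGen_apply_self, if_pos rfl]; ring
        · rw [coxSigmaGen_apply_ne N hx, if_neg hx]; ring
      rw [Finset.sum_congr rfl (fun j _ => step j), Finset.sum_sub_distrib]
      simp
    rw [key, hBii]; ring
  · rw [coxSigmaGen_apply_ne N hb, coxSigmaGen_apply_ne N hb]

end CoxAux

namespace CoxAux

open CoxeterSystem

variable {T : Type*} [Fintype T] [DecidableEq T] (N : T → T → ℕ)

/-- Chebyshev-like sequence. -/
noncomputable def chebD (c : ℝ) : ℕ → ℝ
  | 0 => 0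
  | 1 => 1
  | (k+2) => 2*c*chebD c (k+1) - chebD c k

@[simp] theorem chebD_zero (c : ℝ) : chebD c 0 = 0 := rfl
@[simp] theorem chebD_one (c : ℝ) : chebD c 1 = 1 := rfl
theorem chebD_add_two (c : ℝ) (k : ℕ) :
    chebD c (k+2) = 2*c*chebD c (k+1) - chebD c k := rfl
theorem chebD_two (c : ℝ) : chebD c 2 = 2*c := by
  rw [chebD_add_two]; simp

theorem chebD_sin (θ : ℝ) (hs : Real.sin θ ≠ 0) (k : ℕ) :
    chebD (Real.cos θ) k = Real.sin (k * θ) / Real.sin θ := by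
  induction k using Nat.twoStepInduction with
  | zero => simp
  | one => simp [div_self hs]
  | more k ih1 ih2 =>
    rw [chebD_add_two, ih1, ih2]
    have h1 : ((k + 2 : ℕ) : ℝ) * θ = ((k+1 : ℕ) : ℝ) * θ + θ := by push_cast; ring
    have h2 : ((k : ℕ) : ℝ) * θ = ((k+1 : ℕ) : ℝ) * θ - θ := by push_cast; ring
    rw [h1, h2, Real.sin_add, Real.sin_sub]
    field_simp
    ring

theorem chebD_c1 (k : ℕ) : chebD 1 k = k := by
  induction k using Nat.twoStepInduction with
  | zero => simp
  | one => simp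
  | more k ih1 ih2 => rw [chebD_add_two, ih1, ih2]; push_cast; ring

/-- The part of the pairing sum coming from coordinates outside `{i, j}`. -/
noncomputable def Kfun (i j : T) (v : T → ℝ) (i' : T) : ℝ :=
  ∑ d : T, if d = i ∨ d = j then 0 else v d * coxB N d i'

theorem sum_split {i j : T} (hij : i ≠ j) (v : T → ℝ) (i' : T) :
    ∑ d : T, v d * coxB N d i' =
      v i * coxB N i i' + v j * coxB N j i' + Kfun N i j v i' := by
  have step : ∀ d : T, v d * coxB N d i' =
      (if d = i ∨ d = j then v d * coxB N d i' else 0) +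
        (if d = i ∨ d = j then 0 else v d * coxB N d i') := by
    intro d; by_cases h : d = i ∨ d = j <;> simp [h]
  rw [Finset.sum_congr rfl (fun d _ => step d), Finset.sum_add_distrib]
  congr 1
  have : ∀ d : T, (if d = i ∨ d = j then v d * coxB N d i' else 0) =
      (if d ∈ ({i, j} : Finset T) then v d * coxB N d i' else 0) := by
    intro d; simp [Finset.mem_insert, Finset.mem_singleton]
  rw [Finset.sum_congr rfl (fun d _ => this d)]
  rw [Finset.sum_ite_mem, Finset.univ_inter, Finset.sum_pair hij]

theorem Kfun_congr {i j : T} {u v : T → ℝ} (h : ∀ d, d ≠ i → d ≠ j → u d = v d)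
    (i' : T) : Kfun N i j u i' = Kfun N i j v i' := by
  unfold Kfun
  apply Finset.sum_congr rfl
  intro d _
  by_cases hd : d = i ∨ d = j
  · simp [hd]
  · push_neg at hd
    rw [if_neg (by tauto), if_neg (by tauto), h d hd.1 hd.2]

/-- The key orbit computation for alternating words on two letters. -/
theorem orbit {i j : T} (hij : i ≠ j) {c : ℝ}
    (hBij : coxB N i j = -c) (hBji : coxB N j i = -c)
    (hBii : coxB N i i = 1) (hBjj : coxB N j j = 1)
    (v : T → ℝ) (p q : ℝ)
    (hp : p = -p + 2*c*q - 2 * Kfun N i j v i)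
    (hq : q = 2*c*p - q - 2 * Kfun N i j v j) :
    ∀ k : ℕ, 1 ≤ k →
    (coxSigma N (alternatingWord i j k) v i =
       (if Even k then p + (v i - p) * chebD c (k+1) - (v j - q) * chebD c k
        else p + (v i - p) * chebD c k - (v j - q) * chebD c (k-1))) ∧
    (coxSigma N (alternatingWord i j k) v j =
       (if Even k then q + (v i - p) * chebD c k - (v j - q) * chebD c (k-1)
        else q + (v i - p) * chebD c (k+1) - (v j - q) * chebD c k)) ∧
    (∀ d, d ≠ i → d ≠ j → coxSigma N (alternatingWord i j k) v d = v d) := by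
  have hji : j ≠ i := hij.symm
  intro k hk
  induction k with
  | zero => omega
  | succ k ih =>
    rcases Nat.eq_zero_or_pos k with rfl | hk1
    · -- base case : word is [j]
      have hw : alternatingWord i j 1 = [j] := rfl
      rw [hw]
      have hcs : coxSigma N [j] v = coxSigmaGen N j v := rfl
      rw [hcs]
      refine ⟨?_, ?_, ?_⟩
      · rw [coxSigmaGen_apply_ne N hij]
        simp
      · rw [coxSigmaGen_apply_self, sum_split N hij, hBij, hBjj]
        simp only [Nat.even_add_one, Nat.not_even_iff_odd]
        norm_num [chebD_two]
        linear_combination (-1 : ℝ) * hq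
      · intro d hdi hdj
        rw [coxSigmaGen_apply_ne N hdj]
    · -- inductive step
      obtain ⟨hi', hj', ho'⟩ := ih hk1
      have hsucc : alternatingWord i j (k+1) =
          (if Even k then j else i) :: alternatingWord i j k :=
        alternatingWord_succ' i j k
      rw [hsucc, coxSigma_cons]
      have hK : ∀ i', Kfun N i j (coxSigma N (alternatingWord i j k) v) i' =
          Kfun N i j v i' := fun i' => Kfun_congr N ho' i'
      obtain ⟨k', rfl⟩ : ∃ k', k = k' + 1 := ⟨k - 1, by omega⟩
      rcases Nat.even_or_odd (k' + 1) with hev | hod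
      · -- k = k'+1 even, letter is j, k+1 odd
        have hnev : ¬ Even (k' + 1 + 1) := by simp [Nat.even_add_one, hev]
        rw [if_pos hev] at hi' hj' ⊢
        have hA : chebD c (k'+1+1+1) = 2*c*chebD c (k'+1+1) - chebD c (k'+1) := by
          rw [show k'+1+1+1 = k'+1+2 from by omega]; exact chebD_add_two c (k'+1)
        have hB : chebD c (k'+1+1) = 2*c*chebD c (k'+1) - chebD c k' := by
          rw [show k'+1+1 = k'+2 from by omega]; exact chebD_add_two c k'
        refine ⟨?_, ?_, ?_⟩
        · simp only [Function.comp_apply]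
          rw [coxSigmaGen_apply_ne N hij, hi', if_neg hnev]
          simp
        · simp only [Function.comp_apply]
          rw [coxSigmaGen_apply_self, sum_split N hij, hK, hBij, hBjj, hi', hj',
            if_neg hnev]
          simp only [Nat.add_sub_cancel]
          linear_combination (-1 : ℝ) * hq - (v i - p) * hA + (v j - q) * hB
        · intro d hdi hdj
          simp only [Function.comp_apply]
          rw [coxSigmaGen_apply_ne N hdj, ho' d hdi hdj]
      · -- k = k'+1 odd, letter is i, k+1 even
        have hnev : ¬ Even (k' + 1) := Nat.not_even_iff_odd.mpr hod
        have hev2 : Even (k' + 1 + 1) := by simpa [Nat.even_add_one] using hnev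
        rw [if_neg hnev] at hi' hj' ⊢
        have hA : chebD c (k'+1+1+1) = 2*c*chebD c (k'+1+1) - chebD c (k'+1) := by
          rw [show k'+1+1+1 = k'+1+2 from by omega]; exact chebD_add_two c (k'+1)
        have hB : chebD c (k'+1+1) = 2*c*chebD c (k'+1) - chebD c k' := by
          rw [show k'+1+1 = k'+2 from by omega]; exact chebD_add_two c k'
        refine ⟨?_, ?_, ?_⟩
        · simp only [Function.comp_apply]
          rw [coxSigmaGen_apply_self, sum_split N hij, hK, hBii, hBji, hi', hj',
            if_pos hev2]
          simp only [Nat.add_sub_cancel]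
          linear_combination (-1 : ℝ) * hp - (v i - p) * hA + (v j - q) * hB
        · simp only [Function.comp_apply]
          rw [coxSigmaGen_apply_ne N hji, hj', if_pos hev2]
          simp only [Nat.add_sub_cancel]
        · intro d hdi hdj
          simp only [Function.comp_apply]
          rw [coxSigmaGen_apply_ne N hdi, ho' d hdi hdj]

end CoxAux

namespace CoxAux

open CoxeterSystem

variable {T : Type*} [Fintype T] [DecidableEq T] (N : T → T → ℕ)

theorem coxSigma_append (w1 w2 : List T) :
    coxSigma N (w1 ++ w2) = coxSigma N w1 ∘ coxSigma N w2 := by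
  induction w1 with
  | nil => rfl
  | cons a w ih => simp only [List.cons_append, coxSigma_cons, ih]; rfl

section WithHyp

theorem coxB_diag' (hdiag : ∀ i j, N i j = 1 ↔ i = j) (i : T) : coxB N i i = 1 :=
  coxB_diag N ((hdiag i i).mpr rfl)

theorem coxSigma_reverse_apply (hdiag : ∀ i j, N i j = 1 ↔ i = j) (ω : List T) (v : T → ℝ) :
    coxSigma N ω.reverse (coxSigma N ω v) = v := by
  induction ω generalizing v with
  | nil => rfl
  | cons a ω ih =>
    rw [List.reverse_cons, coxSigma_append]
    simp only [Function.comp_apply]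
    have h1 : coxSigma N [a] (coxSigma N (a :: ω) v) = coxSigma N ω v := by
      show coxSigmaGen N a (coxSigmaGen N a (coxSigma N ω v)) = _
      exact coxSigmaGen_invol N (coxB_diag' N hdiag a) _
    rw [h1, ih]

/-- the generator as a permutation of `T → ℝ` -/
noncomputable def sigmaPerm (hdiag : ∀ i j, N i j = 1 ↔ i = j) (i : T) : Equiv.Perm (T → ℝ) :=
  ⟨coxSigmaGen N i, coxSigmaGen N i,
    fun v => coxSigmaGen_invol N (coxB_diag' N hdiag i) v,
    fun v => coxSigmaGen_invol N (coxB_diag' N hdiag i) v⟩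

theorem sigmaPerm_apply (hdiag : ∀ i j, N i j = 1 ↔ i = j) (i : T) (v : T → ℝ) :
    sigmaPerm N hdiag i v = coxSigmaGen N i v := rfl

theorem pow_pair_apply (hdiag : ∀ i j, N i j = 1 ↔ i = j) (i j : T) (k : ℕ) (v : T → ℝ) :
    ((sigmaPerm N hdiag i * sigmaPerm N hdiag j) ^ k) v =
      coxSigma N (alternatingWord i j (2*k)) v := by
  induction k generalizing v with
  | zero => rfl
  | succ k ih =>
    have hw : alternatingWord i j (2*(k+1)) = i :: j :: alternatingWord i j (2*k) := by
      have e1 : 2*(k+1) = (2*k+1)+1 := by omega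
      have hodd : ¬ Even (2*k+1) := by simp [Nat.even_add_one]
      have hev : Even (2*k) := even_two_mul k
      rw [e1, alternatingWord_succ', if_neg hodd, alternatingWord_succ', if_pos hev]
    rw [hw, pow_succ', Equiv.Perm.mul_apply, Equiv.Perm.mul_apply, ih]
    rfl

theorem braid_perm (hsym : ∀ i j, N i j = N j i) (hdiag : ∀ i j, N i j = 1 ↔ i = j) (i j : T) :
    ((sigmaPerm N hdiag i) * (sigmaPerm N hdiag j)) ^ (N i j) = 1 := by
  by_cases hij : i = j
  · subst hij
    rw [(hdiag i i).mpr rfl, pow_one]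
    apply Equiv.ext
    intro v
    simp only [Equiv.Perm.mul_apply, Equiv.Perm.one_apply, sigmaPerm_apply]
    exact coxSigmaGen_invol N (coxB_diag' N hdiag i) v
  · rcases Nat.eq_zero_or_pos (N i j) with h0 | hpos
    · rw [h0, pow_zero]
    · have hne1 : N i j ≠ 1 := fun h => hij ((hdiag i j).mp h)
      have hm2 : 2 ≤ N i j := by omega
      set m := N i j with hm
      have hmR : (2:ℝ) ≤ (m:ℝ) := by exact_mod_cast hm2
      have hmpos : (0:ℝ) < (m:ℝ) := by linarith
      set θ := Real.pi / m with hθ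
      have hθpos : 0 < θ := by positivity
      have hθle : θ ≤ Real.pi / 2 := by
        rw [hθ, div_le_div_iff₀ hmpos (by norm_num)]
        nlinarith [Real.pi_pos]
      have hθlt : θ < Real.pi := by
        have := Real.pi_pos; linarith
      have hsin : 0 < Real.sin θ := Real.sin_pos_of_pos_of_lt_pi hθpos hθlt
      set c := Real.cos θ with hc
      have hc1 : c < 1 := by
        rcases lt_or_eq_of_le (Real.cos_le_one θ) with h | h
        · exact h
        · exfalso
          have := Real.sin_sq_add_cos_sq θ
          rw [← hc] at this
          nlinarith
      have hc0 : 0 ≤ c := Real.cos_nonneg_of_mem_Icc ⟨by linarith, hθle⟩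
      have hcc : 0 < 1 - c^2 := by nlinarith
      have hBij : coxB N i j = -c := by rw [coxB, if_neg (by omega)]
      have hBji : coxB N j i = -c := by rw [coxB_symm N hsym]; exact hBij
      apply Equiv.ext
      intro v
      rw [pow_pair_apply, Equiv.Perm.one_apply]
      set Ki := Kfun N i j v i with hKi
      set Kj := Kfun N i j v j with hKj
      set p := -(Ki + c * Kj)/(1 - c^2) with hpdef
      set q := c * p - Kj with hqdef
      have hp : p = -p + 2*c*q - 2 * Ki := by
        rw [hqdef, hpdef]; field_simp; ring
      have hq : q = 2*c*p - q - 2 * Kj := by rw [hqdef]; ring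
      obtain ⟨hi', hj', ho'⟩ := orbit N hij hBij hBji (coxB_diag' N hdiag i)
        (coxB_diag' N hdiag j) v p q hp hq (2*m) (by omega)
      have hDsin : ∀ k : ℕ, chebD c k = Real.sin (k * θ) / Real.sin θ :=
        chebD_sin θ (ne_of_gt hsin)
      have hD0 : chebD c (2*m) = 0 := by
        rw [hDsin]
        have : ((2*m : ℕ) : ℝ) * θ = 2 * Real.pi := by
          rw [hθ]; push_cast; field_simp
        rw [this, Real.sin_two_pi, zero_div]
      have hD1 : chebD c (2*m+1) = 1 := by
        rw [hDsin]
        have : ((2*m+1 : ℕ) : ℝ) * θ = 2 * Real.pi + θ := by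
          rw [hθ]; push_cast; field_simp
        rw [this, Real.sin_add, Real.sin_two_pi, Real.cos_two_pi]
        field_simp
        ring
      have hDm1 : chebD c (2*m-1) = -1 := by
        rw [hDsin]
        have : ((2*m-1 : ℕ) : ℝ) * θ = 2 * Real.pi - θ := by
          have : ((2*m-1 : ℕ) : ℝ) = 2*(m:ℝ) - 1 := by
            push_cast [Nat.cast_sub (by omega : 1 ≤ 2*m)]; ring
          rw [this, hθ]; field_simp
        rw [this, Real.sin_sub, Real.sin_two_pi, Real.cos_two_pi]
        field_simp
        ring
      funext d
      by_cases hd : d = i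
      · subst hd
        rw [hi', if_pos (by simp [Nat.even_mul])]
        rw [hD0, hD1]
        ring
      · by_cases hd' : d = j
        · subst hd'
          rw [hj', if_pos (by simp [Nat.even_mul])]
          rw [hD0, hDm1]
          ring
        · exact ho' d hd hd'

theorem sigmaRels (hsym : ∀ i j, N i j = N j i) (hdiag : ∀ i j, N i j = 1 ↔ i = j) :
    ∀ r ∈ coxRels N, FreeGroup.lift (sigmaPerm N hdiag) r = 1 := by
  rintro r ⟨i, j, rfl⟩
  rw [map_pow, map_mul, FreeGroup.lift_apply_of, FreeGroup.lift_apply_of]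
  exact braid_perm N hsym hdiag i j

/-- The geometric representation as a homomorphism on the presented group. -/
noncomputable def sigmaRep (hsym : ∀ i j, N i j = N j i) (hdiag : ∀ i j, N i j = 1 ↔ i = j) : PresentedGroup (coxRels N) →* Equiv.Perm (T → ℝ) :=
  PresentedGroup.toGroup (sigmaRels N hsym hdiag)

theorem coxEval_cons (a : T) (ω : List T) :
    coxEval N (a :: ω) = PresentedGroup.of (rels := coxRels N) a * coxEval N ω := by
  unfold coxEval
  rw [List.map_cons, List.prod_cons]

theorem sigmaRep_eval (hsym : ∀ i j, N i j = N j i) (hdiag : ∀ i j, N i j = 1 ↔ i = j) (ω : List T) :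
    ⇑(sigmaRep N hsym hdiag (coxEval N ω)) = coxSigma N ω := by
  induction ω with
  | nil =>
    have h1 : coxEval N ([] : List T) = 1 := rfl
    rw [h1, map_one]
    rfl
  | cons a ω ih =>
    rw [coxEval_cons, map_mul]
    funext v
    rw [Equiv.Perm.mul_apply]
    have : sigmaRep N hsym hdiag (PresentedGroup.of a) = sigmaPerm N hdiag a :=
      PresentedGroup.toGroup.of (sigmaRels N hsym hdiag)
    rw [this, ih]
    rfl

theorem coxSigma_eval_congr (hsym : ∀ i j, N i j = N j i) (hdiag : ∀ i j, N i j = 1 ↔ i = j) {ω ω' : List T} (h : coxEval N ω = coxEval N ω') :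
    coxSigma N ω = coxSigma N ω' := by
  rw [← sigmaRep_eval N hsym hdiag, ← sigmaRep_eval N hsym hdiag, h]

end WithHyp

/-- The bilinear form of the geometric representation. -/
noncomputable def Bform (u w : T → ℝ) : ℝ :=
  ∑ d : T, u d * (∑ e : T, w e * coxB N e d)

theorem sum_gen_pair (i i' : T) (u : T → ℝ) :
    ∑ d : T, coxSigmaGen N i u d * coxB N d i' =
      (∑ d : T, u d * coxB N d i') - 2 * (∑ d : T, u d * coxB N d i) * coxB N i i' := by
  have step : ∀ d : T, coxSigmaGen N i u d * coxB N d i' =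
      u d * coxB N d i' -
        (if d = i then 2 * (∑ k : T, u k * coxB N k i) * coxB N i i' else 0) := by
    intro d
    by_cases hd : d = i
    · subst hd; rw [coxSigmaGen_apply_self, if_pos rfl]; ring
    · rw [coxSigmaGen_apply_ne N hd, if_neg hd]; ring
  rw [Finset.sum_congr rfl (fun d _ => step d), Finset.sum_sub_distrib]
  simp

theorem Bform_gen_invariant (hsym : ∀ i j, N i j = N j i) {i : T}
    (hBii : coxB N i i = 1) (u w : T → ℝ) :
    Bform N (coxSigmaGen N i u) (coxSigmaGen N i w) = Bform N u w := by
  unfold Bform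
  have hgc : ∀ d : T, (∑ e : T, coxSigmaGen N i w e * coxB N e d) =
      (∑ e : T, w e * coxB N e d) - 2 * (∑ e : T, w e * coxB N e i) * coxB N i d :=
    fun d => sum_gen_pair N i d w
  rw [Finset.sum_congr rfl (fun d _ => by rw [hgc d])]
  have expand : ∀ d : T, coxSigmaGen N i u d *
      ((∑ e : T, w e * coxB N e d) - 2 * (∑ e : T, w e * coxB N e i) * coxB N i d) =
      coxSigmaGen N i u d * (∑ e : T, w e * coxB N e d) -
      2 * (∑ e : T, w e * coxB N e i) * (coxSigmaGen N i u d * coxB N i d) := by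
    intro d; ring
  rw [Finset.sum_congr rfl (fun d _ => expand d), Finset.sum_sub_distrib]
  rw [← Finset.mul_sum]
  -- second sum : ∑ d, coxSigmaGen u d * B i d = -(∑ d, u d * B d i)
  have hsym' : ∀ d, coxB N i d = coxB N d i := fun d => coxB_symm N hsym i d
  have hsum2 : ∑ d : T, coxSigmaGen N i u d * coxB N i d = -(∑ d : T, u d * coxB N d i) := by
    rw [Finset.sum_congr rfl (fun d _ => by rw [hsym' d])]
    rw [sum_gen_pair N i i u, hBii]
    ring
  rw [hsum2]
  -- first sum : ∑ d, coxSigmaGen u d * gcol d = ∑ d, u d * gcol d - 2 su * gcol i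
  have step : ∀ d : T, coxSigmaGen N i u d * (∑ e : T, w e * coxB N e d) =
      u d * (∑ e : T, w e * coxB N e d) -
        (if d = i then 2 * (∑ k : T, u k * coxB N k i) * (∑ e : T, w e * coxB N e i) else 0) := by
    intro d
    by_cases hd : d = i
    · subst hd; rw [coxSigmaGen_apply_self, if_pos rfl]; ring
    · rw [coxSigmaGen_apply_ne N hd, if_neg hd]; ring
  rw [Finset.sum_congr rfl (fun d _ => step d), Finset.sum_sub_distrib]
  simp only [Finset.sum_ite_eq', Finset.mem_univ, if_pos]
  ring

theorem Bform_invariant (hsym : ∀ i j, N i j = N j i) (hdiag : ∀ i j, N i j = 1 ↔ i = j)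
    (ω : List T) (u w : T → ℝ) :
    Bform N (coxSigma N ω u) (coxSigma N ω w) = Bform N u w := by
  induction ω with
  | nil => rfl
  | cons a ω ih =>
    rw [coxSigma_cons]
    simp only [Function.comp_apply]
    rw [Bform_gen_invariant N hsym (coxB_diag' N hdiag a), ih]

end CoxAux

namespace CoxAux

open CoxeterSystem

/-- congruence of presented groups along an equality of relation sets -/
def presCongr {α : Type*} {R1 R2 : Set (FreeGroup α)} (h : R1 = R2) :
    PresentedGroup R1 ≃* PresentedGroup R2 := h ▸ MulEquiv.refl _

theorem presCongr_symm_of {α : Type*} {R1 R2 : Set (FreeGroup α)} (h : R1 = R2) (x : α) :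
    (presCongr h).symm (PresentedGroup.of x) = PresentedGroup.of x := by
  subst h; rfl

variable {T : Type*} [Fintype T] [DecidableEq T] (N : T → T → ℕ)

/-- The Coxeter matrix bundling `N`. -/
def coxMat (hsym : ∀ i j, N i j = N j i) (hdiag : ∀ i j, N i j = 1 ↔ i = j) :
    CoxeterMatrix T where
  M := Matrix.of N
  isSymm := by
    ext i j
    exact hsym j i
  diagonal i := (hdiag i i).mpr rfl
  off_diagonal i j h := fun hc => h ((hdiag i j).mp hc)

theorem coxMat_relationsSet (hsym : ∀ i j, N i j = N j i)
    (hdiag : ∀ i j, N i j = 1 ↔ i = j) :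
    (coxMat N hsym hdiag).relationsSet = coxRels N := by
  ext r
  constructor
  · rintro ⟨⟨i, j⟩, rfl⟩
    exact ⟨i, j, rfl⟩
  · rintro ⟨i, j, rfl⟩
    exact ⟨⟨i, j⟩, rfl⟩

/-- The Coxeter system on `PresentedGroup (coxRels N)`. -/
def coxSys (hsym : ∀ i j, N i j = N j i) (hdiag : ∀ i j, N i j = 1 ↔ i = j) :
    CoxeterSystem (coxMat N hsym hdiag) (PresentedGroup (coxRels N)) :=
  ⟨presCongr (coxMat_relationsSet N hsym hdiag).symm⟩

theorem coxSys_simple (hsym : ∀ i j, N i j = N j i) (hdiag : ∀ i j, N i j = 1 ↔ i = j)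
    (i : T) : (coxSys N hsym hdiag).simple i = PresentedGroup.of i :=
  presCongr_symm_of _ i

theorem coxSys_wordProd (hsym : ∀ i j, N i j = N j i) (hdiag : ∀ i j, N i j = 1 ↔ i = j)
    (ω : List T) : (coxSys N hsym hdiag).wordProd ω = coxEval N ω := by
  unfold CoxeterSystem.wordProd coxEval
  congr 1
  exact List.map_congr_left fun a _ => coxSys_simple N hsym hdiag a

end CoxAux

namespace CoxAux

open CoxeterSystem

theorem chebD_nonneg_of_le {m j : ℕ} (hm2 : 2 ≤ m) (hj : j ≤ m) :
    0 ≤ chebD (Real.cos (Real.pi / m)) j := by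
  have hmR : (2:ℝ) ≤ (m:ℝ) := by exact_mod_cast hm2
  have hmpos : (0:ℝ) < (m:ℝ) := by linarith
  have hpi := Real.pi_pos
  have hθpos : 0 < Real.pi / m := by positivity
  have hθle : Real.pi / m ≤ Real.pi / 2 := by
    rw [div_le_div_iff₀ hmpos (by norm_num)]
    nlinarith
  have hθlt : Real.pi / m < Real.pi := by linarith
  have hsin : 0 < Real.sin (Real.pi / m) :=
    Real.sin_pos_of_pos_of_lt_pi hθpos hθlt
  rw [chebD_sin _ (ne_of_gt hsin)]
  apply div_nonneg _ (le_of_lt hsin)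
  apply Real.sin_nonneg_of_nonneg_of_le_pi
  · positivity
  · have hjR : (j:ℝ) ≤ (m:ℝ) := by exact_mod_cast hj
    calc (j:ℝ) * (Real.pi / m) ≤ (m:ℝ) * (Real.pi / m) := by
          apply mul_le_mul_of_nonneg_right hjR (le_of_lt hθpos)
      _ = Real.pi := by field_simp

theorem unitVec_nonneg {T : Type*} [DecidableEq T] (s c : T) : 0 ≤ unitVec s c := by
  unfold unitVec; split <;> norm_num

variable {T : Type*} [Fintype T] [DecidableEq T] (N : T → T → ℕ)

theorem Kfun_unit (s t : T) (i' : T) : Kfun N s t (unitVec s) i' = 0 := by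
  apply Finset.sum_eq_zero
  intro d _
  by_cases hd : d = s ∨ d = t
  · simp [hd]
  · push_neg at hd
    rw [if_neg (by tauto)]
    unfold unitVec
    rw [if_neg hd.1, zero_mul]

/-- The main positivity theorem: if `ℓ(g·s) > ℓ(g)` then `σ_g(αₛ) ≥ 0` coordinatewise. -/
theorem main_nonneg (hsym : ∀ i j, N i j = N j i) (hdiag : ∀ i j, N i j = 1 ↔ i = j) :
    ∀ n : ℕ, ∀ g : PresentedGroup (coxRels N),
      (coxSys N hsym hdiag).length g = n →
      ∀ s : T, (coxSys N hsym hdiag).length g <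
        (coxSys N hsym hdiag).length (g * (coxSys N hsym hdiag).simple s) →
      ∀ c : T, 0 ≤ (sigmaRep N hsym hdiag g) (unitVec s) c := by
  classical
  set cs := coxSys N hsym hdiag with hcs
  intro n
  induction n using Nat.strong_induction_on with
  | _ n ih =>
  intro g hg s hgs c
  by_cases hg1 : g = 1
  · subst hg1
    rw [map_one, Equiv.Perm.one_apply]
    exact unitVec_nonneg s c
  · obtain ⟨t, ht⟩ := cs.exists_rightDescent_of_ne_one hg1
    have hts : t ≠ s := by
      rintro rfl
      exact absurd hgs (by unfold CoxeterSystem.IsRightDescent at ht; omega)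
    have hst : s ≠ t := hts.symm
    have hgt : cs.length (g * cs.simple t) + 1 = cs.length g := by
      rcases cs.length_mul_simple g t with h | h
      · exact absurd ht (by unfold CoxeterSystem.IsRightDescent; omega)
      · exact h
    -- the set of candidate decompositions
    set P : ℕ → Prop := fun lv => ∃ v k, g = v * cs.wordProd (alternatingWord s t k) ∧
      cs.length g = cs.length v + k ∧ cs.length v = lv with hP
    have hPex : ∃ lv, P lv := by
      refine ⟨cs.length (g * cs.simple t), g * cs.simple t, 1, ?_, by omega, rfl⟩
      have hw : alternatingWord s t 1 = [t] := rfl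
      rw [hw, wordProd_cons, wordProd_nil, mul_one, mul_assoc,
        cs.simple_mul_simple_self, mul_one]
    set lv0 := Nat.find hPex with hlv0
    obtain ⟨v, k, hgvk, hlen, hlv⟩ := Nat.find_spec hPex
    have hlv0le : lv0 ≤ cs.length (g * cs.simple t) := Nat.find_min' hPex (by
      refine ⟨g * cs.simple t, 1, ?_, by omega, rfl⟩
      have hw : alternatingWord s t 1 = [t] := rfl
      rw [hw, wordProd_cons, wordProd_nil, mul_one, mul_assoc,
        cs.simple_mul_simple_self, mul_one])
    have hk1 : 1 ≤ k := by omega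
    have hlvlt : cs.length v < cs.length g := by omega
    -- v has no descent at s
    have hvs : cs.length v < cs.length (v * cs.simple s) := by
      by_contra hc
      push_neg at hc
      have hne := cs.length_mul_simple_ne v s
      have hvs' : cs.length (v * cs.simple s) + 1 = cs.length v := by
        rcases cs.length_mul_simple v s with h | h
        · omega
        · exact h
      rcases Nat.even_or_odd k with hev | hod
      · -- k even ≥ 2 : direct length contradiction
        obtain ⟨k', rfl⟩ : ∃ k', k = k' + 1 := ⟨k - 1, by omega⟩
        have hkodd : ¬ Even k' := by simpa [Nat.even_add_one] using hev
        have hw : alternatingWord s t (k' + 1) = s :: alternatingWord s t k' :=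
          (alternatingWord_succ' s t k').trans (by rw [if_neg hkodd])
        have : g = (v * cs.simple s) * cs.wordProd (alternatingWord s t k') := by
          rw [hgvk, hw, wordProd_cons, mul_assoc]
        have hle : cs.length g ≤ cs.length (v * cs.simple s) + k' := by
          calc cs.length g ≤ cs.length (v * cs.simple s) +
              cs.length (cs.wordProd (alternatingWord s t k')) := by
                rw [this]; exact cs.length_mul_le _ _
            _ ≤ cs.length (v * cs.simple s) + k' := by
                have := cs.length_wordProd_le (alternatingWord s t k')
                rw [length_alternatingWord] at this
                omega
        omega
      · -- k odd : produce a smaller element of P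
        have hkodd : ¬ Even k := Nat.not_even_iff_odd.mpr hod
        have hw : alternatingWord s t (k + 1) = s :: alternatingWord s t k :=
          (alternatingWord_succ' s t k).trans (by rw [if_neg hkodd])
        have hmem : P (cs.length (v * cs.simple s)) := by
          refine ⟨v * cs.simple s, k + 1, ?_, by omega, rfl⟩
          rw [hw, wordProd_cons, hgvk, mul_assoc, cs.simple_mul_simple_cancel_left]
        have := Nat.find_min hPex (m := cs.length (v * cs.simple s)) (by omega)
        exact this hmem
    -- v has no descent at t
    have hvt : cs.length v < cs.length (v * cs.simple t) := by
      by_contra hc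
      push_neg at hc
      have hne := cs.length_mul_simple_ne v t
      have hvt' : cs.length (v * cs.simple t) + 1 = cs.length v := by
        rcases cs.length_mul_simple v t with h | h
        · omega
        · exact h
      rcases Nat.even_or_odd k with hev | hod
      · -- k even : produce a smaller element of P
        have hw : alternatingWord s t (k + 1) = t :: alternatingWord s t k :=
          (alternatingWord_succ' s t k).trans (by rw [if_pos hev])
        have hmem : P (cs.length (v * cs.simple t)) := by
          refine ⟨v * cs.simple t, k + 1, ?_, by omega, rfl⟩
          rw [hw, wordProd_cons, hgvk, mul_assoc, cs.simple_mul_simple_cancel_left]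
        have := Nat.find_min hPex (m := cs.length (v * cs.simple t)) (by omega)
        exact this hmem
      · -- k odd : direct length contradiction
        obtain ⟨k', rfl⟩ : ∃ k', k = k' + 1 := ⟨k - 1, by omega⟩
        have hkev : Even k' := by
          rcases hod with ⟨r, hr⟩
          exact ⟨r, by omega⟩
        have hw : alternatingWord s t (k' + 1) = t :: alternatingWord s t k' :=
          (alternatingWord_succ' s t k').trans (by rw [if_pos hkev])
        have : g = (v * cs.simple t) * cs.wordProd (alternatingWord s t k') := by
          rw [hgvk, hw, wordProd_cons, mul_assoc]
        have hle : cs.length g ≤ cs.length (v * cs.simple t) + k' := by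
          calc cs.length g ≤ cs.length (v * cs.simple t) +
              cs.length (cs.wordProd (alternatingWord s t k')) := by
                rw [this]; exact cs.length_mul_le _ _
            _ ≤ cs.length (v * cs.simple t) + k' := by
                have := cs.length_wordProd_le (alternatingWord s t k')
                rw [length_alternatingWord] at this
                omega
        omega
    -- bound on k
    have hkm : N s t = 0 ∨ k < N s t := by
      by_contra hc
      push_neg at hc
      obtain ⟨hm0, hmk⟩ := hc
      rcases lt_or_eq_of_le hmk with hlt | heq
      · -- k > N s t : the alternating word is not reduced
        have hnr := cs.not_isReduced_alternatingWord s t (by exact hm0) (by exact hlt)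
        have hle : cs.length (cs.wordProd (alternatingWord s t k)) < k := by
          have h1 := cs.length_wordProd_le (alternatingWord s t k)
          rw [length_alternatingWord] at h1
          rcases lt_or_eq_of_le h1 with h | h
          · exact h
          · exact absurd (show cs.IsReduced (alternatingWord s t k) by
              show cs.length (cs.wordProd (alternatingWord s t k)) =
                (alternatingWord s t k).length
              rw [length_alternatingWord]; exact h) hnr
        have : cs.length g ≤ cs.length v + cs.length (cs.wordProd (alternatingWord s t k)) := by
          rw [hgvk]; exact cs.length_mul_le _ _
        omega
      · -- k = N s t : use the braid relation
        have hbraid : cs.wordProd (alternatingWord s t k) =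
            cs.wordProd (alternatingWord t s k) := by
          have h1 := cs.wordProd_braidWord_eq s t
          simp only [CoxeterSystem.braidWord] at h1
          have hMst : (coxMat N hsym hdiag) s t = k := by rw [← heq]; rfl
          have hMts : (coxMat N hsym hdiag) t s = k := by
            rw [← heq]; exact hsym t s
          rw [hMst, hMts] at h1
          exact h1
        obtain ⟨k', rfl⟩ : ∃ k', k = k' + 1 := ⟨k - 1, by omega⟩
        have hw : alternatingWord t s (k' + 1) =
            (alternatingWord s t k').concat s := alternatingWord_succ t s k'
        have hgss : g * cs.simple s = v * cs.wordProd (alternatingWord s t k') := by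
          rw [hgvk, hbraid, hw, wordProd_concat, ← mul_assoc,
            cs.simple_mul_simple_cancel_right]
        have hle : cs.length (g * cs.simple s) ≤ cs.length v + k' := by
          calc cs.length (g * cs.simple s) ≤ cs.length v +
              cs.length (cs.wordProd (alternatingWord s t k')) := by
                rw [hgss]; exact cs.length_mul_le _ _
            _ ≤ cs.length v + k' := by
                have := cs.length_wordProd_le (alternatingWord s t k')
                rw [length_alternatingWord] at this
                omega
        omega
    -- now the representation-theoretic part
    have hBst : coxB N s t = coxB N t s := coxB_symm N hsym s t
    set c0 : ℝ := - coxB N s t with hc0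
    have hBij : coxB N s t = -c0 := by rw [hc0]; ring
    have hBji : coxB N t s = -c0 := by rw [← hBst]; exact hBij
    have horb := orbit N hst hBij hBji (coxB_diag' N hdiag s) (coxB_diag' N hdiag t)
      (unitVec s) 0 0 (by simp [Kfun_unit]) (by simp [Kfun_unit]) k hk1
    obtain ⟨hi', hj', ho'⟩ := horb
    have hus : unitVec s s = (1:ℝ) := by simp [unitVec]
    have hut : unitVec s t = (0:ℝ) := by simp [unitVec, hts]
    have hts0 : unitVec t s = (0:ℝ) := by simp [unitVec, hst]
    have htt : unitVec t t = (1:ℝ) := by simp [unitVec]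
    -- the two chebD coefficients
    set D1 : ℝ := (if Even k then chebD c0 (k+1) else chebD c0 k) with hD1def
    set D2 : ℝ := (if Even k then chebD c0 k else chebD c0 (k+1)) with hD2def
    have hvec : coxSigma N (alternatingWord s t k) (unitVec s) =
        fun d => D1 * unitVec s d + D2 * unitVec t d := by
      funext d
      by_cases hd : d = s
      · rw [hd, hi', hus, hut, hts0]
        rcases Nat.even_or_odd k with hev | hod
        · rw [if_pos hev, hD1def, if_pos hev]; ring
        · have hkodd : ¬ Even k := Nat.not_even_iff_odd.mpr hod
          rw [if_neg hkodd, hD1def, if_neg hkodd]; ring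
      · by_cases hd' : d = t
        · rw [hd', hj', hus, hut, htt]
          rcases Nat.even_or_odd k with hev | hod
          · rw [if_pos hev, hD2def, if_pos hev]; ring
          · have hkodd : ¬ Even k := Nat.not_even_iff_odd.mpr hod
            rw [if_neg hkodd, hD2def, if_neg hkodd]; ring
        · rw [ho' d hd hd']
          have h1 : unitVec s d = 0 := by simp [unitVec, hd]
          have h2 : unitVec t d = 0 := by simp [unitVec, hd']
          rw [h1, h2]; ring
    -- nonnegativity of the chebD coefficients
    have hDnn : 0 ≤ D1 ∧ 0 ≤ D2 := by
      have key : ∀ j : ℕ, j ≤ k + 1 → 0 ≤ chebD c0 j := by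
        intro j hj
        rcases hkm with hm0 | hmlt
        · have : c0 = 1 := by
            rw [hc0, coxB, if_pos hm0]; norm_num
          rw [this, chebD_c1]
          positivity
        · have hm2 : 2 ≤ N s t := by omega
          have : c0 = Real.cos (Real.pi / (N s t : ℝ)) := by
            rw [hc0, coxB, if_neg (by omega)]; ring
          rw [this]
          exact chebD_nonneg_of_le hm2 (by omega)
      constructor
      · rw [hD1def]; split
        · exact key _ (by omega)
        · exact key _ (by omega)
      · rw [hD2def]; split
        · exact key _ (by omega)
        · exact key _ (by omega)
    -- decompose and apply the induction hypothesis
    obtain ⟨ωv, hωvlen, hωv⟩ := cs.exists_reduced_word v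
    have hφv : ⇑(sigmaRep N hsym hdiag v) = coxSigma N ωv := by
      rw [hωv, coxSys_wordProd N hsym hdiag]
      exact sigmaRep_eval N hsym hdiag ωv
    have hφg : (sigmaRep N hsym hdiag g) (unitVec s) =
        coxSigma N ωv (coxSigma N (alternatingWord s t k) (unitVec s)) := by
      rw [hgvk, map_mul, Equiv.Perm.mul_apply, ← hφv]
      congr 1
      rw [coxSys_wordProd N hsym hdiag, sigmaRep_eval N hsym hdiag]
    rw [hφg, hvec]
    have hlin := coxSigma_linear N ωv D1 D2 (unitVec s) (unitVec t)
    rw [hlin]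
    have hihs : 0 ≤ coxSigma N ωv (unitVec s) c := by
      rw [← hφv]
      exact ih (cs.length v) (by omega) v rfl s hvs c
    have hiht : 0 ≤ coxSigma N ωv (unitVec t) c := by
      rw [← hφv]
      exact ih (cs.length v) (by omega) v rfl t hvt c
    exact add_nonneg (mul_nonneg hDnn.1 hihs) (mul_nonneg hDnn.2 hiht)

end CoxAux

namespace CoxAux

open CoxeterSystem

theorem relator_one {α : Type*} {rels : Set (FreeGroup α)} {r : FreeGroup α} (h : r ∈ rels) :
    PresentedGroup.mk rels r = 1 :=
  (QuotientGroup.eq_one_iff _).mpr (Subgroup.subset_normalClosure h)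

theorem gen_rel_one {α : Type*} (N : α → α → ℕ) (i j : α) :
    ((PresentedGroup.of i * PresentedGroup.of j : PresentedGroup (coxRels N)) ^ (N i j)) = 1 := by
  have h1 : (PresentedGroup.of i * PresentedGroup.of j : PresentedGroup (coxRels N)) =
      PresentedGroup.mk (coxRels N) (FreeGroup.of i * FreeGroup.of j) := by
    rw [map_mul]; rfl
  rw [h1, ← map_pow]
  exact relator_one ⟨i, j, rfl⟩

variable {S : Type*} [Fintype S] [DecidableEq S] (M : S → S → ℕ)

theorem extMatrix_symm (hsym : ∀ i j, M i j = M j i) :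
    ∀ i j, extMatrix M i j = extMatrix M j i := by
  rintro (_|i) (_|j) <;> simp [extMatrix] <;> exact hsym i j

theorem extMatrix_diag (hdiag : ∀ i j, M i j = 1 ↔ i = j) :
    ∀ i j, extMatrix M i j = 1 ↔ i = j := by
  rintro (_|i) (_|j) <;> simp [extMatrix]
  constructor
  · exact fun h => (hdiag i j).mp h
  · exact fun h => by rw [h]; exact (hdiag j j).mpr rfl

theorem jrels : ∀ r ∈ coxRels M,
    FreeGroup.lift (fun i => (PresentedGroup.of (some i) :
      PresentedGroup (coxRels (extMatrix M)))) r = 1 := by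
  rintro r ⟨i, j, rfl⟩
  rw [map_pow, map_mul, FreeGroup.lift_apply_of, FreeGroup.lift_apply_of]
  exact gen_rel_one (extMatrix M) (some i) (some j)

/-- The inclusion `G → G'`. -/
noncomputable def jhom : PresentedGroup (coxRels M) →* PresentedGroup (coxRels (extMatrix M)) :=
  PresentedGroup.toGroup (jrels M)

theorem jhom_eval (w : List S) :
    jhom M (coxEval M w) = coxEval (extMatrix M) (w.map some) := by
  induction w with
  | nil => simp [coxEval]
  | cons a w ih =>
    rw [coxEval_cons, map_mul, ih, List.map_cons, coxEval_cons]
    congr 1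

theorem rrels : ∀ r ∈ coxRels (extMatrix M),
    FreeGroup.lift (fun x : Option S => (Option.elim x 1 (fun i => PresentedGroup.of i) :
      PresentedGroup (coxRels M))) r = 1 := by
  rintro r ⟨x, y, rfl⟩
  rw [map_pow, map_mul, FreeGroup.lift_apply_of, FreeGroup.lift_apply_of]
  match x, y with
  | some i, some j => exact gen_rel_one M i j
  | none, none => rw [show extMatrix M (none : Option S) none = 1 from rfl, pow_one]; simp
  | some i, none => rw [show extMatrix M (some i) none = 0 from rfl, pow_zero]
  | none, some j => rw [show extMatrix M none (some j) = 0 from rfl, pow_zero]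

/-- The retraction `G' → G` killing the extra generator. -/
noncomputable def rhom : PresentedGroup (coxRels (extMatrix M)) →* PresentedGroup (coxRels M) :=
  PresentedGroup.toGroup (rrels M)

theorem rhom_of_some (i : S) : rhom M (PresentedGroup.of (some i)) = PresentedGroup.of i :=
  PresentedGroup.toGroup.of (rrels M)

theorem rhom_of_none : rhom M (PresentedGroup.of (none : Option S)) = 1 :=
  PresentedGroup.toGroup.of (rrels M)

theorem rhom_eval (ω : List (Option S)) :
    rhom M (coxEval (extMatrix M) ω) = coxEval M (ω.filterMap id) := by
  induction ω with
  | nil => simp [coxEval]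
  | cons x ω ih =>
    rw [coxEval_cons, map_mul, ih]
    match x with
    | some i =>
      have h1 : List.filterMap id (some i :: ω) = i :: List.filterMap id ω := by
        simp [List.filterMap_cons]
      rw [h1, coxEval_cons]
      show rhom M (PresentedGroup.of (some i)) * _ = _
      rw [rhom_of_some]
    | none =>
      have h1 : List.filterMap id ((none : Option S) :: ω) = List.filterMap id ω := by
        simp [List.filterMap_cons]
      rw [h1]
      show rhom M (PresentedGroup.of (none : Option S)) * _ = _
      rw [rhom_of_none, one_mul]

theorem rhom_jhom_eval (w : List S) : rhom M (jhom M (coxEval M w)) = coxEval M w := by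
  rw [jhom_eval, rhom_eval]
  congr 1
  rw [List.filterMap_map]
  simp

end CoxAux

namespace CoxAux

open CoxeterSystem

variable {S : Type*} [Fintype S] [DecidableEq S] (M : S → S → ℕ)

theorem sigma_some_none (w : List S) (v : Option S → ℝ) :
    coxSigma (extMatrix M) (w.map some) v none = v none := by
  induction w generalizing v with
  | nil => rfl
  | cons a w ih =>
    rw [List.map_cons, coxSigma_cons]
    simp only [Function.comp_apply]
    rw [coxSigmaGen_apply_ne _ (by simp), ih]

theorem eval_congr_sigma (hsym : ∀ i j, M i j = M j i) (hdiag : ∀ i j, M i j = 1 ↔ i = j)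
    {u w : List S} (h : coxEval M u = coxEval M w) :
    coxSigma (extMatrix M) (u.map some) = coxSigma (extMatrix M) (w.map some) := by
  apply coxSigma_eval_congr (extMatrix M) (extMatrix_symm M hsym) (extMatrix_diag M hdiag)
  rw [← jhom_eval, ← jhom_eval, h]

theorem x_ascent (hsym : ∀ i j, M i j = M j i) (hdiag : ∀ i j, M i j = 1 ↔ i = j)
    (w : List S) :
    (coxSys (extMatrix M) (extMatrix_symm M hsym) (extMatrix_diag M hdiag)).length
        (coxEval (extMatrix M) (w.map some)) <
      (coxSys (extMatrix M) (extMatrix_symm M hsym) (extMatrix_diag M hdiag)).length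
        (coxEval (extMatrix M) (w.map some) *
          (coxSys (extMatrix M) (extMatrix_symm M hsym) (extMatrix_diag M hdiag)).simple none) := by
  set NE := extMatrix M with hNE
  set hsymE := extMatrix_symm M hsym
  set hdiagE := extMatrix_diag M hdiag
  set cs := coxSys NE hsymE hdiagE with hcs
  set g' := coxEval NE (w.map some) with hg'
  by_contra hc
  push_neg at hc
  have hne := cs.length_mul_simple_ne g' none
  have hlt : cs.length (g' * cs.simple none) < cs.length g' := by omega
  set g'' := g' * cs.simple none with hg''
  have hback : g'' * cs.simple none = g' := by
    rw [hg'', mul_assoc, cs.simple_mul_simple_self, mul_one]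
  have hcond : cs.length g'' < cs.length (g'' * cs.simple none) := by rw [hback]; omega
  have hnn := main_nonneg NE hsymE hdiagE (cs.length g'') g'' rfl none hcond
  -- σ_{g'}(α_x) = - σ_{g''}(α_x)
  obtain ⟨ω'', hω''len, hω''⟩ := cs.exists_reduced_word g''
  have hφ'' : ⇑(sigmaRep NE hsymE hdiagE g'') = coxSigma NE ω'' := by
    rw [hω'', coxSys_wordProd]
    exact sigmaRep_eval NE hsymE hdiagE ω''
  have hsimple : cs.simple none = PresentedGroup.of (none : Option S) :=
    coxSys_simple NE hsymE hdiagE none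
  have hφs : (sigmaRep NE hsymE hdiagE (cs.simple none)) (unitVec none) =
      fun d => (-1) * unitVec none d + 0 * unitVec none d := by
    rw [hsimple]
    have h1 : sigmaRep NE hsymE hdiagE (PresentedGroup.of (none : Option S)) =
        sigmaPerm NE hdiagE none := PresentedGroup.toGroup.of (sigmaRels NE hsymE hdiagE)
    rw [h1]
    funext d
    rw [sigmaPerm_apply]
    by_cases hd : d = (none : Option S)
    · subst hd
      rw [coxSigmaGen_apply_self]
      have hsum : ∑ j : Option S, unitVec (none : Option S) j * coxB NE j none =
          coxB NE none none := by
        have step : ∀ j : Option S, unitVec (none : Option S) j * coxB NE j none =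
            (if j = (none : Option S) then coxB NE none none else 0) := by
          intro j
          by_cases hj : j = (none : Option S)
          · subst hj; simp [unitVec]
          · simp [unitVec, hj]
        rw [Finset.sum_congr rfl fun j _ => step j]
        simp
      rw [hsum, coxB_diag' NE hdiagE]
      norm_num [unitVec]
    · rw [coxSigmaGen_apply_ne _ hd]
      simp [unitVec, hd]
  have hdecomp : (sigmaRep NE hsymE hdiagE g') (unitVec none) =
      fun d => (-1) * coxSigma NE ω'' (unitVec none) d + 0 * coxSigma NE ω'' (unitVec none) d := by
    rw [← hback, map_mul, Equiv.Perm.mul_apply, hφs]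
    rw [show (fun d => (-1) * unitVec (none : Option S) d + 0 * unitVec none d) =
      (fun d => (-1) * unitVec (none : Option S) d + 0 * unitVec none d) from rfl]
    rw [hφ'', coxSigma_linear]
  have h1 : (sigmaRep NE hsymE hdiagE g') (unitVec none) none = 1 := by
    rw [show ⇑(sigmaRep NE hsymE hdiagE g') = coxSigma NE (w.map some) from by
      rw [hg']; exact sigmaRep_eval NE hsymE hdiagE _]
    rw [sigma_some_none]
    simp [unitVec]
  have h2 : (sigmaRep NE hsymE hdiagE g') (unitVec none) none ≤ 0 := by
    rw [hdecomp]
    have := hnn none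
    rw [hφ''] at this
    simp only []
    nlinarith
  rw [h1] at h2
  norm_num at h2

theorem nonneg_all (hsym : ∀ i j, M i j = M j i) (hdiag : ∀ i j, M i j = 1 ↔ i = j)
    (w : List S) (c : Option S) :
    0 ≤ coxSigma (extMatrix M) (w.map some) (unitVec none) c := by
  set NE := extMatrix M
  set hsymE := extMatrix_symm M hsym
  set hdiagE := extMatrix_diag M hdiag
  have := main_nonneg NE hsymE hdiagE _ (coxEval NE (w.map some)) rfl none
    (x_ascent M hsym hdiag w) c
  rwa [sigmaRep_eval NE hsymE hdiagE] at this

theorem geodesic_reduced (hsym : ∀ i j, M i j = M j i) (hdiag : ∀ i j, M i j = 1 ↔ i = j)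
    {u : List S} (hgeo : ∀ x, coxEval M x = coxEval M u → u.length ≤ x.length) :
    (coxSys (extMatrix M) (extMatrix_symm M hsym) (extMatrix_diag M hdiag)).length
      (coxEval (extMatrix M) (u.map some)) = u.length := by
  set NE := extMatrix M
  set hsymE := extMatrix_symm M hsym
  set hdiagE := extMatrix_diag M hdiag
  set cs := coxSys NE hsymE hdiagE with hcs
  apply le_antisymm
  · have h1 := cs.length_wordProd_le (u.map some)
    rw [coxSys_wordProd] at h1
    simpa using h1
  · obtain ⟨ω, hωlen, hωeq⟩ := cs.exists_reduced_word (coxEval NE (u.map some))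
    have heq2 : coxEval NE ω = coxEval NE (u.map some) := by
      rw [← coxSys_wordProd NE hsymE hdiagE ω, ← hωeq]
    have h3 : coxEval M (ω.filterMap id) = coxEval M u := by
      have hr := congrArg (rhom M) heq2
      rw [rhom_eval] at hr
      rw [hr, rhom_eval]
      congr 1
      rw [List.filterMap_map]
      simp
    have h4 := hgeo (ω.filterMap id) h3
    have h5 : (ω.filterMap id).length ≤ ω.length := List.length_filterMap_le id ω
    exact le_trans h4 (le_trans h5 (le_of_eq (by rw [hωeq]; exact Eq.symm hωlen)))

theorem Bform_unit_left {T : Type*} [Fintype T] [DecidableEq T] (N : T → T → ℕ)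
    (i : T) (v : T → ℝ) :
    Bform N (unitVec i) v = ∑ e : T, v e * coxB N e i := by
  unfold Bform
  have step : ∀ d : T, unitVec i d * (∑ e : T, v e * coxB N e d) =
      (if d = i then (∑ e : T, v e * coxB N e i) else 0) := by
    intro d
    by_cases hd : d = i
    · subst hd; simp [unitVec]
    · simp [unitVec, hd]
  rw [Finset.sum_congr rfl fun d _ => step d]
  simp

theorem coxSigma_rev_rev {T : Type*} [Fintype T] [DecidableEq T] (N : T → T → ℕ)
    (hdiag : ∀ i j, N i j = 1 ↔ i = j) (ω : List T) (v : T → ℝ) :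
    coxSigma N ω (coxSigma N ω.reverse v) = v := by
  have := coxSigma_reverse_apply N hdiag ω.reverse v
  rwa [List.reverse_reverse] at this

end CoxAux

namespace CoxAux

open CoxeterSystem

variable {S : Type*} [Fintype S] [DecidableEq S] (M : S → S → ℕ)

theorem supp (hsym : ∀ i j, M i j = M j i) (hdiag : ∀ i j, M i j = 1 ↔ i = j) :
    ∀ (u : List S), (∀ x, coxEval M x = coxEval M u → u.length ≤ x.length) → ∀ b : S,
      (b ∈ u → 0 < coxSigma (extMatrix M) (u.map some) (unitVec none) (some b)) ∧
      (b ∉ u → coxSigma (extMatrix M) (u.map some) (unitVec none) (some b) = 0) := by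
  set NE := extMatrix M with hNE
  set hsymE := extMatrix_symm M hsym
  set hdiagE := extMatrix_diag M hdiag
  set cs := coxSys NE hsymE hdiagE with hcs
  intro u
  induction u with
  | nil =>
    intro _ b
    refine ⟨fun h => absurd h (List.not_mem_nil), fun _ => ?_⟩
    show unitVec (none : Option S) (some b) = 0
    simp [unitVec]
  | cons a u' ih =>
    intro hgeo b
    have hgeo' : ∀ x, coxEval M x = coxEval M u' → u'.length ≤ x.length := by
      intro x hx
      have h1 : coxEval M (a :: x) = coxEval M (a :: u') := by
        rw [coxEval_cons, coxEval_cons, hx]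
      have := hgeo (a :: x) h1
      simpa using this
    have hcons : ∀ d, coxSigma NE ((a::u').map some) (unitVec none) d =
        coxSigmaGen NE (some a) (coxSigma NE (u'.map some) (unitVec none)) d :=
      fun d => rfl
    by_cases hba : b = a
    · subst hba
      refine ⟨?_, fun hnm => absurd (List.mem_cons_self) hnm⟩
      intro _
      rw [hcons, coxSigmaGen_apply_self]
      set lam' := coxSigma NE (u'.map some) (unitVec none) with hlam'
      set μ := coxSigma NE ((u'.map some)).reverse (unitVec (some b)) with hμ
      have hμrev : coxSigma NE (u'.map some) μ = unitVec (some b) :=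
        coxSigma_rev_rev NE hdiagE _ _
      have hpair : ∑ d : Option S, lam' d * coxB NE d (some b) =
          Bform NE (unitVec (some b)) lam' := (Bform_unit_left NE _ _).symm
      have hinv : Bform NE (unitVec (some b)) lam' = Bform NE μ (unitVec none) := by
        conv_lhs => rw [← hμrev, hlam']
        exact Bform_invariant NE hsymE hdiagE (u'.map some) μ (unitVec none)
      have hBnone : ∀ d : Option S,
          (∑ e : Option S, unitVec (none : Option S) e * coxB NE e d) = coxB NE none d := by
        intro d
        have step : ∀ e : Option S, unitVec (none : Option S) e * coxB NE e d =
            if e = (none : Option S) then coxB NE none d else 0 := by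
          intro e; by_cases he : e = (none : Option S)
          · subst he; simp [unitVec]
          · simp [unitVec, he]
        rw [Finset.sum_congr rfl fun e _ => step e]; simp
      have hc1 : coxB NE none none = 1 := coxB_diag' NE hdiagE none
      have hc2 : ∀ b' : S, coxB NE none (some b') = -1 := by
        intro b'
        show (if NE none (some b') = 0 then (-1:ℝ)
          else -Real.cos (Real.pi / (NE none (some b') : ℝ))) = -1
        have h0 : NE none (some b') = 0 := rfl
        rw [if_pos h0]
      have hform : Bform NE μ (unitVec none) = μ none - ∑ b' : S, μ (some b') := by
        unfold Bform
        rw [Finset.sum_congr rfl fun d _ => by rw [hBnone d]]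
        rw [show (Finset.univ : Finset (Option S)) = Finset.insertNone Finset.univ from
          univ_option S]
        rw [Finset.sum_insertNone]
        rw [hc1, mul_one]
        rw [Finset.sum_congr rfl fun b' _ => by rw [hc2 b']]
        have hneg : ∑ b' : S, μ (some b') * -1 = -∑ b' : S, μ (some b') := by simp
        rw [hneg]; ring
      have hμnone : μ none = 0 := by
        rw [hμ, ← List.map_reverse, sigma_some_none]
        simp [unitVec]
      have hμnn : ∀ d, 0 ≤ μ d := by
        set g' := coxEval NE (u'.map some) with hg'
        have hg'' : coxEval NE (u'.reverse.map some) = g'⁻¹ := by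
          rw [show u'.reverse.map some = (u'.map some).reverse from List.map_reverse]
          rw [← coxSys_wordProd NE hsymE hdiagE, CoxeterSystem.wordProd_reverse,
            coxSys_wordProd NE hsymE hdiagE]
        have hlg'' : cs.length (coxEval NE (u'.reverse.map some)) = u'.length := by
          rw [hg'', cs.length_inv]
          exact geodesic_reduced M hsym hdiag hgeo'
        have hmulinv : (coxEval NE (u'.reverse.map some) * cs.simple (some b))⁻¹ =
            coxEval NE ((b :: u').map some) := by
          rw [hg'', mul_inv_rev, inv_inv, cs.inv_simple, List.map_cons, coxEval_cons,
            coxSys_simple NE hsymE hdiagE]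
        have hlcond : cs.length (coxEval NE (u'.reverse.map some)) <
            cs.length (coxEval NE (u'.reverse.map some) * cs.simple (some b)) := by
          have h1 : cs.length (coxEval NE (u'.reverse.map some) * cs.simple (some b)) =
              cs.length (coxEval NE ((b :: u').map some)) := by
            calc cs.length (coxEval NE (u'.reverse.map some) * cs.simple (some b))
                = cs.length ((coxEval NE (u'.reverse.map some) * cs.simple (some b))⁻¹) :=
                  (cs.length_inv _).symm
              _ = cs.length (coxEval NE ((b :: u').map some)) := by rw [hmulinv]
          rw [h1, geodesic_reduced M hsym hdiag hgeo, hlg'']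
          simp
        intro d
        have hmn := main_nonneg NE hsymE hdiagE _ (coxEval NE (u'.reverse.map some)) rfl
          (some b) hlcond d
        rwa [sigmaRep_eval NE hsymE hdiagE,
          show u'.reverse.map some = (u'.map some).reverse from List.map_reverse,
          ← hμ] at hmn
      have hμne : ∃ d, μ d ≠ 0 := by
        by_contra hcon
        push_neg at hcon
        have hz : μ = fun _ => 0 := funext hcon
        rw [hz, coxSigma_zero] at hμrev
        have := congrFun hμrev (some b)
        simp [unitVec] at this
      obtain ⟨d, hd⟩ := hμne
      obtain ⟨b0, rfl⟩ : ∃ b0, d = some b0 := by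
        cases d with
        | none => exact absurd hμnone hd
        | some b0 => exact ⟨b0, rfl⟩
      have hb0 : 0 < μ (some b0) := lt_of_le_of_ne (hμnn _) (Ne.symm hd)
      have hsum : 0 < ∑ b' : S, μ (some b') :=
        lt_of_lt_of_le hb0
          (Finset.single_le_sum (fun b' _ => hμnn (some b')) (Finset.mem_univ b0))
      have hlam'nn : 0 ≤ lam' (some b) := nonneg_all M hsym hdiag u' (some b)
      rw [hpair, hinv, hform, hμnone]
      linarith
    · have hne : (some b : Option S) ≠ some a := by simpa using hba
      constructor
      · intro hmem
        have hmem' : b ∈ u' := by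
          rcases List.mem_cons.mp hmem with h | h
          · exact absurd h hba
          · exact h
        rw [hcons, coxSigmaGen_apply_ne _ hne]
        exact (ih hgeo' b).1 hmem'
      · intro hnmem
        have hnmem' : b ∉ u' := fun h => hnmem (List.mem_cons_of_mem a h)
        rw [hcons, coxSigmaGen_apply_ne _ hne]
        exact (ih hgeo' b).2 hnmem'

end CoxAux


/-- Let `G' = G * (ℤ/2ℤ)` with new generator `x`, and for `w ∈ G` write
`σ_w(x) = Σ_b λ_b b` in the geometric representation of `G'`. Then all coefficients
`λ_b` are nonnegative, and for every generator `b` of `G`: `λ_b ≠ 0` iff `b` occurs in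
some geodesic word for `w`; moreover `λ_b > 0` whenever `b` occurs in a geodesic for `w`. -/
theorem coxeter_sigma_x_alphabet {S : Type*} [Fintype S] [DecidableEq S]
    (M : S → S → ℕ)
    (hsym : ∀ i j, M i j = M j i)
    (hdiag : ∀ i j, M i j = 1 ↔ i = j)
    (w : List S) :
    (∀ c : Option S, 0 ≤ coxSigma (extMatrix M) (w.map some) (unitVec none) c) ∧
    ∀ b : S,
      (coxSigma (extMatrix M) (w.map some) (unitVec none) (some b) ≠ 0 ↔
        ∃ u : List S, (∀ x : List S, coxEval M x = coxEval M u → u.length ≤ x.length) ∧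
          coxEval M u = coxEval M w ∧ b ∈ u) ∧
      (∀ u : List S, (∀ x : List S, coxEval M x = coxEval M u → u.length ≤ x.length) →
        coxEval M u = coxEval M w → b ∈ u →
          0 < coxSigma (extMatrix M) (w.map some) (unitVec none) (some b)) := by
  classical
  have hex : ∃ n, ∃ u : List S, coxEval M u = coxEval M w ∧ u.length = n :=
    ⟨w.length, w, rfl, rfl⟩
  obtain ⟨u₀, hu₀eval, hu₀len⟩ := Nat.find_spec hex
  have hgeo₀ : ∀ x : List S, coxEval M x = coxEval M u₀ → u₀.length ≤ x.length := by
    intro x hx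
    have h1 : Nat.find hex ≤ x.length :=
      Nat.find_min' hex ⟨x, hx.trans hu₀eval, rfl⟩
    omega
  have hcong : coxSigma (extMatrix M) (u₀.map some) = coxSigma (extMatrix M) (w.map some) :=
    CoxAux.eval_congr_sigma M hsym hdiag hu₀eval
  refine ⟨CoxAux.nonneg_all M hsym hdiag w, ?_⟩
  intro b
  refine ⟨⟨?_, ?_⟩, ?_⟩
  · intro hne0
    by_cases hb : b ∈ u₀
    · exact ⟨u₀, hgeo₀, hu₀eval, hb⟩
    · exact absurd (by
        rw [← hcong]
        exact (CoxAux.supp M hsym hdiag u₀ hgeo₀ b).2 hb) hne0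
  · rintro ⟨u, hugeo, hueval, hbu⟩
    have hpos := (CoxAux.supp M hsym hdiag u hugeo b).1 hbu
    rw [CoxAux.eval_congr_sigma M hsym hdiag hueval] at hpos
    exact ne_of_gt hpos
  · intro u hugeo hueval hbu
    have hpos := (CoxAux.supp M hsym hdiag u hugeo b).1 hbu
    rwa [CoxAux.eval_congr_sigma M hsym hdiag hueval] at hpos
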